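/- Let λ ∈ (0,1), C > 0 and R ∈ ℕ with R ≥ 1 be such that λ + C·λ^R < 1. Then there exist C₉ > 0 and λ₆ ∈ (0,1) such that for every n ≥ 1, ∑ over all integers p ≥ 1 and all tuples (n_1, …, n_p) of naturals with n_i ≥ R for every i and n_1 + ⋯ + n_p = n, of the product ∏_{i=1}^{p} (C·λ^{n_i}), is at most C₉·λ₆^n. -/

import Mathlib

/-- Geometric tail bound: for `0 ≤ x < 1`, `∑_{p=m}^{n} x^p ≤ x^m / (1-x)`. -/
lemma geom_Icc_sum_le (x : ℝ) (hx0 : 0 ≤ x) (hx1 : x < 1) (m n : ℕ) :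
    ∑ p ∈ Finset.Icc m n, x ^ p ≤ x ^ m / (1 - x) := by
  have h1 : (0:ℝ) < 1 - x := by linarith
  have hsub : Finset.Icc m n ⊆ (Finset.range (n + 1)).image (· + m) := by
    intro k hk
    simp only [Finset.mem_Icc] at hk
    simp only [Finset.mem_image, Finset.mem_range]
    exact ⟨k - m, by omega, by omega⟩
  calc ∑ p ∈ Finset.Icc m n, x ^ p
      ≤ ∑ p ∈ (Finset.range (n + 1)).image (· + m), x ^ p := by
        apply Finset.sum_le_sum_of_subset_of_nonneg hsub
        intro i _ _; positivity
    _ = ∑ k ∈ Finset.range (n + 1), x ^ (k + m) := by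
        rw [Finset.sum_image]
        intro a _ b _ h; simp only at h; omega
    _ = (∑ k ∈ Finset.range (n + 1), x ^ k) * x ^ m := by
        rw [Finset.sum_mul]; simp_rw [pow_add]
    _ ≤ (1 / (1 - x)) * x ^ m := by
        apply mul_le_mul_of_nonneg_right _ (by positivity)
        rw [geom_sum_eq hx1.ne]
        rw [show (x ^ (n+1) - 1) / (x - 1) = (1 - x ^ (n+1)) / (1 - x) by
          rw [← neg_div_neg_eq]; ring_nf]
        have hxn : (0:ℝ) ≤ x ^ (n + 1) := by positivity
        exact div_le_div₀ zero_le_one (by linarith) h1 le_rfl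
    _ = x ^ m / (1 - x) := by ring

set_option maxHeartbeats 1000000 in
theorem composition_sum_exponential_decay
    (lam C : ℝ) (hlam0 : 0 < lam) (hlam1 : lam < 1) (hC : 0 < C)
    (R : ℕ) (hR : 1 ≤ R) (hcond : lam + C * lam ^ R < 1) :
    ∃ C₉ > 0, ∃ lam₆ ∈ Set.Ioo (0 : ℝ) 1, ∀ n : ℕ, 1 ≤ n →
      (∑ p ∈ Finset.Icc 1 n,
        ∑ f ∈ (Fintype.piFinset fun _ : Fin p => Finset.range (n + 1)) |>.filter
            (fun f => (∀ i, R ≤ f i) ∧ ∑ i, f i = n),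
          ∏ i, C * lam ^ (f i)) ≤ C₉ * lam₆ ^ n := by
  -- Choose `t < 1` close to 1 with `t^R * (t - lam) - C * lam^R * t > 0`.
  have hFc : Continuous fun t : ℝ => t ^ R * (t - lam) - C * lam ^ R * t := by continuity
  have hF1 : (1:ℝ) ∈ {t : ℝ | 0 < t ^ R * (t - lam) - C * lam ^ R * t} := by
    simp only [Set.mem_setOf_eq, one_pow, one_mul, mul_one]
    linarith
  obtain ⟨ε, hε, hball⟩ := Metric.isOpen_iff.1 (isOpen_lt continuous_const hFc) 1 hF1
  set t : ℝ := max ((1 + lam) / 2) (1 - ε / 2) with ht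
  have htlam : lam < t := lt_of_lt_of_le (by linarith) (le_max_left _ _)
  have ht1 : t < 1 := max_lt (by linarith) (by linarith)
  have ht0 : 0 < t := hlam0.trans htlam
  have htmem : t ∈ Metric.ball (1:ℝ) ε := by
    rw [Metric.mem_ball, Real.dist_eq, abs_lt]
    have h2 : 1 - ε / 2 ≤ t := le_max_right _ _
    constructor <;> linarith
  have hFt : 0 < t ^ R * (t - lam) - C * lam ^ R * t := hball htmem
  set a : ℝ := lam / t with ha
  have ha0 : 0 < a := div_pos hlam0 ht0
  have ha1 : a < 1 := (div_lt_one ht0).2 htlam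
  have h1a : (0:ℝ) < 1 - a := by linarith
  set θ : ℝ := C * a ^ R / (1 - a) with hθ
  have hθ0 : 0 < θ := by positivity
  have htR : (0:ℝ) < t ^ R := by positivity
  have hθ1 : θ < 1 := by
    rw [hθ, div_lt_one h1a, ha, div_pow, ← mul_div_assoc]
    rw [show (1 : ℝ) - lam / t = (t - lam) / t by field_simp]
    rw [div_lt_div_iff₀ htR ht0]
    nlinarith [hFt]
  refine ⟨θ / (1 - θ), div_pos hθ0 (by linarith), t, ⟨ht0, ht1⟩, fun n hn => ?_⟩
  have key : ∀ p ∈ Finset.Icc 1 n,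
      (∑ f ∈ (Fintype.piFinset fun _ : Fin p => Finset.range (n + 1)) |>.filter
            (fun f => (∀ i, R ≤ f i) ∧ ∑ i, f i = n),
          ∏ i, C * lam ^ (f i)) ≤ t ^ n * θ ^ p := by
    intro p hp
    have step1 : (∑ f ∈ (Fintype.piFinset fun _ : Fin p => Finset.range (n + 1)) |>.filter
            (fun f => (∀ i, R ≤ f i) ∧ ∑ i, f i = n),
          ∏ i, C * lam ^ (f i))
        = t ^ n * ∑ f ∈ (Fintype.piFinset fun _ : Fin p => Finset.range (n + 1)) |>.filter
            (fun f => (∀ i, R ≤ f i) ∧ ∑ i, f i = n),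
          ∏ i, C * a ^ (f i) := by
      rw [Finset.mul_sum]
      apply Finset.sum_congr rfl
      intro f hf
      rw [Finset.mem_filter] at hf
      obtain ⟨hf1, hf2, hf3⟩ := hf
      have hlam_eq : lam = t * a := by rw [ha]; field_simp [ht0.ne']
      calc ∏ i, C * lam ^ (f i) = ∏ i, t ^ (f i) * (C * a ^ (f i)) := by
            apply Finset.prod_congr rfl
            intro i _
            rw [hlam_eq, mul_pow]; ring
        _ = (∏ i, t ^ (f i)) * ∏ i, C * a ^ (f i) := Finset.prod_mul_distrib
        _ = t ^ n * ∏ i, C * a ^ (f i) := by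
            rw [Finset.prod_pow_eq_pow_sum, hf3]
    rw [step1]
    apply mul_le_mul_of_nonneg_left _ (by positivity)
    -- drop the sum constraint
    have hsub : ((Fintype.piFinset fun _ : Fin p => Finset.range (n + 1)) |>.filter
            (fun f => (∀ i, R ≤ f i) ∧ ∑ i, f i = n))
        ⊆ Fintype.piFinset fun _ : Fin p => Finset.Icc R n := by
      intro f hf
      rw [Finset.mem_filter, Fintype.mem_piFinset] at hf
      obtain ⟨hf1, hf2, hf3⟩ := hf
      rw [Fintype.mem_piFinset]
      intro i
      have := hf1 i
      rw [Finset.mem_range] at this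
      rw [Finset.mem_Icc]
      exact ⟨hf2 i, by omega⟩
    calc (∑ f ∈ (Fintype.piFinset fun _ : Fin p => Finset.range (n + 1)) |>.filter
            (fun f => (∀ i, R ≤ f i) ∧ ∑ i, f i = n),
          ∏ i, C * a ^ (f i))
        ≤ ∑ f ∈ Fintype.piFinset fun _ : Fin p => Finset.Icc R n, ∏ i, C * a ^ (f i) := by
          apply Finset.sum_le_sum_of_subset_of_nonneg hsub
          intro f _ _; positivity
      _ = ∏ _i : Fin p, ∑ m ∈ Finset.Icc R n, C * a ^ m := (Finset.prod_univ_sum (fun _ : Fin p => Finset.Icc R n) (fun _ m => C * a ^ m)).symm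
      _ = (∑ m ∈ Finset.Icc R n, C * a ^ m) ^ p := by
          rw [Finset.prod_const, Finset.card_univ, Fintype.card_fin]
      _ ≤ θ ^ p := by
          apply pow_le_pow_left₀ (by positivity)
          rw [← Finset.mul_sum, hθ]
          rw [mul_div_assoc]
          exact mul_le_mul_of_nonneg_left (geom_Icc_sum_le a ha0.le ha1 R n) hC.le
  calc (∑ p ∈ Finset.Icc 1 n,
        ∑ f ∈ (Fintype.piFinset fun _ : Fin p => Finset.range (n + 1)) |>.filter
            (fun f => (∀ i, R ≤ f i) ∧ ∑ i, f i = n),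
          ∏ i, C * lam ^ (f i))
      ≤ ∑ p ∈ Finset.Icc 1 n, t ^ n * θ ^ p := Finset.sum_le_sum key
    _ = t ^ n * ∑ p ∈ Finset.Icc 1 n, θ ^ p := by rw [Finset.mul_sum]
    _ ≤ t ^ n * (θ ^ 1 / (1 - θ)) := by
        apply mul_le_mul_of_nonneg_left (geom_Icc_sum_le θ hθ0.le hθ1 1 n) (by positivity)
    _ = θ / (1 - θ) * t ^ n := by rw [pow_one]; ring
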